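/- Assume P, H, V, Θ and Ô are as in the context. Let p, q ∈ P be such that no single member of H ∪ V contains both p and q. Then rld(p,q) = min{ Ô(i,j) : i, j ∈ H ∪ V, p ∈ i, q ∈ j }. (In the paper's setting, where p lies in exactly one member i of H and one member i' of V and q lies in exactly one member j of H and one member j' of V, this minimum equals min{Ô(i,j), Ô(i,j'), Ô(i',j), Ô(i',j')}.) -/

import Mathlib

/-- A segment with endpoints `p` and `q` is axis-parallel: horizontal (equal
`y`-coordinates) or vertical (equal `x`-coordinates). -/
def AxisParallel (p q : ℝ × ℝ) : Prop := p.2 = q.2 ∨ p.1 = q.1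

/-- `f` describes a rectilinear path from `p` to `q` in `P` with `k ≥ 1` links:
`f 0 = p`, `f k = q`, and each closed segment from `f t` to `f (t+1)` is contained
in `P` and is axis-parallel. -/
def IsRectPath (P : Set (ℝ × ℝ)) (p q : ℝ × ℝ) (k : ℕ) (f : ℕ → ℝ × ℝ) : Prop :=
  1 ≤ k ∧ f 0 = p ∧ f k = q ∧
    ∀ t < k, segment ℝ (f t) (f (t + 1)) ⊆ P ∧ AxisParallel (f t) (f (t + 1))

/-- The rectilinear link distance: the minimum link length of a rectilinear path
from `p` to `q` in `P`. -/
noncomputable def rld (P : Set (ℝ × ℝ)) (p q : ℝ × ℝ) : ℕ :=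
  sInf {k : ℕ | ∃ f : ℕ → ℝ × ℝ, IsRectPath P p q k f}

/-- A box: a closed axis-aligned rectangle `[a,b] × [c,d]` with `a < b` and `c < d`. -/
def IsBox (B : Set (ℝ × ℝ)) : Prop :=
  ∃ a b c d : ℝ, a < b ∧ c < d ∧ B = Set.Icc a b ×ˢ Set.Icc c d

/-- The graph of oriented distances `Θ`: the bipartite graph on the (disjoint) union of
the families `H` and `V`, with an edge between `h ∈ H` and `v ∈ V` exactly when
`h ∩ v ≠ ∅`. -/
def thetaGraph (H V : Set (Set (ℝ × ℝ))) :
    SimpleGraph {B : Set (ℝ × ℝ) // B ∈ H ∪ V} where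
  Adj x y := x ≠ y ∧
    ((x.1 ∈ H ∧ y.1 ∈ V) ∨ (x.1 ∈ V ∧ y.1 ∈ H)) ∧ (x.1 ∩ y.1).Nonempty
  symm := by
    constructor
    rintro x y ⟨hxy, hor, hne⟩
    refine ⟨hxy.symm, ?_, by rwa [Set.inter_comm]⟩
    rcases hor with ⟨h1, h2⟩ | ⟨h1, h2⟩
    · exact Or.inr ⟨h2, h1⟩
    · exact Or.inl ⟨h2, h1⟩
  loopless := by constructor; rintro x ⟨hxx, -⟩; exact hxx rfl

/-- The oriented distance `Ô(i,j)`: the graph distance in `Θ` plus one. -/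
noncomputable def oDist (H V : Set (Set (ℝ × ℝ)))
    (i j : {B : Set (ℝ × ℝ) // B ∈ H ∪ V}) : ℕ :=
  (thetaGraph H V).dist i j + 1

/-- `H` and `V` form a good decomposition of `P`: they are finite families of boxes
contained in `P`; every horizontal (resp. vertical) segment contained in `P` lies in
some member of `H` (resp. `V`); for `h ∈ H` and `v ∈ V` meeting each other, `h ∩ v`
is the product of the `x`-projection of `v` with the `y`-projection of `h`; and the
graph of oriented distances is connected. -/
structure GoodDecomp (P : Set (ℝ × ℝ)) (H V : Set (Set (ℝ × ℝ))) : Prop where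
  finH : H.Finite
  finV : V.Finite
  box : ∀ B ∈ H ∪ V, IsBox B
  sub : ∀ B ∈ H ∪ V, B ⊆ P
  covH : ∀ p q : ℝ × ℝ, p.2 = q.2 → segment ℝ p q ⊆ P → ∃ h ∈ H, segment ℝ p q ⊆ h
  covV : ∀ p q : ℝ × ℝ, p.1 = q.1 → segment ℝ p q ⊆ P → ∃ v ∈ V, segment ℝ p q ⊆ v
  cross : ∀ h ∈ H, ∀ v ∈ V, (h ∩ v).Nonempty →
    h ∩ v = (Prod.fst '' v) ×ˢ (Prod.snd '' h)
  conn : (thetaGraph H V).Connected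


lemma boxConvex {B : Set (ℝ × ℝ)} (h : ∃ a b c d : ℝ, a < b ∧ c < d ∧ B = Set.Icc a b ×ˢ Set.Icc c d) :
    Convex ℝ B := by
  obtain ⟨a, b, c, d, -, -, rfl⟩ := h
  exact (convex_Icc a b).prod (convex_Icc c d)

lemma seg_split_h {a b c : ℝ × ℝ} (h1 : a.2 = b.2) (h2 : b.2 = c.2) :
    segment ℝ a c ⊆ segment ℝ a b ∪ segment ℝ b c := by
  intro z hz
  obtain ⟨u, v, hu, hv, huv, hz⟩ := hz
  have hz1 : z.1 ∈ segment ℝ a.1 c.1 := ⟨u, v, hu, hv, huv, by rw [← hz]; rfl⟩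
  have hz2 : z.2 = a.2 := by
    rw [← hz]; show u * a.2 + v * c.2 = a.2
    rw [← h2, ← h1]; linear_combination a.2 * huv
  rw [segment_eq_uIcc] at hz1
  rcases Set.uIcc_subset_uIcc_union_uIcc (b := b.1) hz1 with h | h
  · left
    rw [← segment_eq_uIcc] at h
    obtain ⟨s, t, hs, ht, hst, hzz⟩ := h
    exact ⟨s, t, hs, ht, hst, Prod.ext hzz (by show s * a.2 + t * b.2 = z.2; rw [hz2, ← h1]; linear_combination a.2 * hst)⟩
  · right
    rw [← segment_eq_uIcc] at h
    obtain ⟨s, t, hs, ht, hst, hzz⟩ := h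
    exact ⟨s, t, hs, ht, hst, Prod.ext hzz (by show s * b.2 + t * c.2 = z.2; rw [hz2, ← h2, ← h1]; linear_combination a.2 * hst)⟩

lemma seg_split_v {a b c : ℝ × ℝ} (h1 : a.1 = b.1) (h2 : b.1 = c.1) :
    segment ℝ a c ⊆ segment ℝ a b ∪ segment ℝ b c := by
  intro z hz
  obtain ⟨u, v, hu, hv, huv, hz⟩ := hz
  have hz1 : z.2 ∈ segment ℝ a.2 c.2 := ⟨u, v, hu, hv, huv, by rw [← hz]; rfl⟩
  have hz2 : z.1 = a.1 := by
    rw [← hz]; show u * a.1 + v * c.1 = a.1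
    rw [← h2, ← h1]; linear_combination a.1 * huv
  rw [segment_eq_uIcc] at hz1
  rcases Set.uIcc_subset_uIcc_union_uIcc (b := b.2) hz1 with h | h
  · left
    rw [← segment_eq_uIcc] at h
    obtain ⟨s, t, hs, ht, hst, hzz⟩ := h
    exact ⟨s, t, hs, ht, hst, Prod.ext (by show s * a.1 + t * b.1 = z.1; rw [hz2, ← h1]; linear_combination a.1 * hst) hzz⟩
  · right
    rw [← segment_eq_uIcc] at h
    obtain ⟨s, t, hs, ht, hst, hzz⟩ := h
    exact ⟨s, t, hs, ht, hst, Prod.ext (by show s * b.1 + t * c.1 = z.1; rw [hz2, ← h2, ← h1]; linear_combination a.1 * hst) hzz⟩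

lemma rect_upper {P : Set (ℝ × ℝ)} {H V : Set (Set (ℝ × ℝ))}
    (hgood : GoodDecomp P H V) (q : ℝ × ℝ) :
    ∀ (i j : {B : Set (ℝ × ℝ) // B ∈ H ∪ V}) (W : (thetaGraph H V).Walk i j),
      q ∈ j.1 → ∀ r, r ∈ i.1 → (W.length = 0 → AxisParallel r q) →
      ∃ f, IsRectPath P r q (W.length + 1) f := by
  intro i j W
  induction W with
  | nil =>
    intro hq r hr hal
    refine ⟨fun n => if n = 0 then r else q, le_refl 1, rfl, rfl, ?_⟩
    intro t ht
    simp only [SimpleGraph.Walk.length_nil] at ht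
    interval_cases t
    exact ⟨fun z hz => hgood.sub _ (Subtype.coe_prop _)
      ((boxConvex (hgood.box _ (Subtype.coe_prop _))).segment_subset hr hq hz), hal rfl⟩
  | @cons i i' j adj W ih =>
    intro hq r hr _
    obtain ⟨hne, hor, hint⟩ := adj
    have hconv := boxConvex (hgood.box i.1 i.2)
    have hsub := hgood.sub i.1 i.2
    have key : ∃ r', r' ∈ i.1 ∩ i'.1 ∧ AxisParallel r r' ∧
        (W.length = 0 → AxisParallel r' q) := by
      rcases hor with ⟨hiH, hi'V⟩ | ⟨hiV, hi'H⟩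
      · have hcr := hgood.cross i.1 hiH i'.1 hi'V hint
        by_cases h0 : W.length = 0
        · have hq' : q ∈ i'.1 := (SimpleGraph.Walk.eq_of_length_eq_zero h0) ▸ hq
          refine ⟨(q.1, r.2), ?_, Or.inl rfl, fun _ => Or.inr rfl⟩
          rw [hcr]; exact ⟨⟨q, hq', rfl⟩, ⟨r, hr, rfl⟩⟩
        · obtain ⟨z, hz⟩ := hint
          have hz' := hcr ▸ hz
          refine ⟨(z.1, r.2), ?_, Or.inl rfl, fun h => absurd h h0⟩
          rw [hcr]; exact ⟨hz'.1, ⟨r, hr, rfl⟩⟩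
      · have hcr := hgood.cross i'.1 hi'H i.1 hiV (by rwa [Set.inter_comm] at hint)
        rw [Set.inter_comm] at hcr
        by_cases h0 : W.length = 0
        · have hq' : q ∈ i'.1 := (SimpleGraph.Walk.eq_of_length_eq_zero h0) ▸ hq
          refine ⟨(r.1, q.2), ?_, Or.inr rfl, fun _ => Or.inl rfl⟩
          rw [hcr]; exact ⟨⟨r, hr, rfl⟩, ⟨q, hq', rfl⟩⟩
        · obtain ⟨z, hz⟩ := hint
          have hz' := hcr ▸ hz
          refine ⟨(r.1, z.2), ?_, Or.inr rfl, fun h => absurd h h0⟩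
          rw [hcr]; exact ⟨⟨r, hr, rfl⟩, hz'.2⟩
    obtain ⟨r', hr'mem, hax, hal'⟩ := key
    obtain ⟨f', hf'1, hf'0, hf'k, hf'seg⟩ := ih hq r' hr'mem.2 hal'
    refine ⟨fun n => if n = 0 then r else f' (n - 1), by omega, by simp, ?_, ?_⟩
    · simp only [SimpleGraph.Walk.length_cons]
      rw [if_neg (by omega)]
      exact hf'k
    · intro t ht
      dsimp only
      rcases Nat.eq_zero_or_pos t with rfl | htpos
      · simp only [if_pos rfl, if_neg one_ne_zero]
        refine ⟨?_, ?_⟩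
        · intro z hz
          exact hsub (hconv.segment_subset hr hr'mem.1 (by simpa [hf'0] using hz))
        · simpa [hf'0] using hax
      · rw [if_neg (by omega), if_neg (by omega)]
        have h1 : t - 1 + 1 = t := by omega
        have h2 : t + 1 - 1 = t - 1 + 1 := by omega
        rw [h2, h1]
        have := hf'seg (t - 1) (by have ht' : t < W.length + 1 + 1 := ht; omega)
        rwa [h1] at this

lemma rect_lower {P : Set (ℝ × ℝ)} {H V : Set (Set (ℝ × ℝ))}
    (hgood : GoodDecomp P H V) (p q : ℝ × ℝ)
    (hsep : ¬ ∃ B ∈ H ∪ V, p ∈ B ∧ q ∈ B) :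
    ∀ k f, IsRectPath P p q k f →
      ∃ i j : {B : Set (ℝ × ℝ) // B ∈ H ∪ V}, p ∈ i.1 ∧ q ∈ j.1 ∧
        (thetaGraph H V).dist i j + 1 ≤ k := by
  intro k
  induction k using Nat.strong_induction_on with
  | _ k IH =>
  rintro f ⟨hk1, h0, hk, hseg⟩
  rcases eq_or_lt_of_le hk1 with hk1' | hk2
  · -- k = 1 : contradiction with hsep
    exfalso
    obtain ⟨hsub, hax⟩ := hseg 0 (by omega)
    have h1 : f 1 = q := by rw [← hk1'] at hk; exact hk
    rw [h0, h1] at hsub hax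
    rcases hax with hh | hv
    · obtain ⟨B, hB, hB2⟩ := hgood.covH p q hh hsub
      exact hsep ⟨B, Or.inl hB, hB2 (left_mem_segment ℝ p q), hB2 (right_mem_segment ℝ p q)⟩
    · obtain ⟨B, hB, hB2⟩ := hgood.covV p q hv hsub
      exact hsep ⟨B, Or.inr hB, hB2 (left_mem_segment ℝ p q), hB2 (right_mem_segment ℝ p q)⟩
  · by_cases hmerge : ∃ t, t + 2 ≤ k ∧
        (((f t).2 = (f (t+1)).2 ∧ (f (t+1)).2 = (f (t+2)).2) ∨
         ((f t).1 = (f (t+1)).1 ∧ (f (t+1)).1 = (f (t+2)).1))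
    · obtain ⟨t, ht, hcol⟩ := hmerge
      have hpath : IsRectPath P p q (k - 1) (fun s => if s ≤ t then f s else f (s + 1)) := by
        refine ⟨by omega, by simp only [if_pos (Nat.zero_le t)]; exact h0, ?_, ?_⟩
        · dsimp only
          rw [if_neg (by omega)]
          have e : k - 1 + 1 = k := by omega
          rw [e]; exact hk
        · intro s hs
          dsimp only
          rcases lt_trichotomy s t with hst | rfl | hst
          · rw [if_pos (by omega), if_pos (by omega)]
            exact hseg s (by omega)
          · rw [if_pos le_rfl, if_neg (by omega)]
            obtain ⟨hs1, ha1⟩ := hseg s (by omega)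
            obtain ⟨hs2, ha2⟩ := hseg (s + 1) (by omega)
            constructor
            · rcases hcol with ⟨c1, c2⟩ | ⟨c1, c2⟩
              · exact fun z hz => (seg_split_h c1 c2 hz).elim (fun h => hs1 h) (fun h => hs2 h)
              · exact fun z hz => (seg_split_v c1 c2 hz).elim (fun h => hs1 h) (fun h => hs2 h)
            · rcases hcol with ⟨c1, c2⟩ | ⟨c1, c2⟩
              · exact Or.inl (c1.trans c2)
              · exact Or.inr (c1.trans c2)
          · rw [if_neg (by omega), if_neg (by omega)]
            have e : s + 1 + 1 = s + 1 + 1 := rfl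
            exact hseg (s + 1) (by omega)
      obtain ⟨i, j, hpi, hqj, hle⟩ := IH (k - 1) (by omega) _ hpath
      exact ⟨i, j, hpi, hqj, by omega⟩
    · -- no mergeable pair: segments strictly alternate
      have hB : ∀ t, t < k → ∃ B : {B : Set (ℝ × ℝ) // B ∈ H ∪ V},
          segment ℝ (f t) (f (t+1)) ⊆ B.1 ∧
          ((f t).2 = (f (t+1)).2 → B.1 ∈ H) ∧ (¬ (f t).2 = (f (t+1)).2 → B.1 ∈ V) := by
        intro t ht
        obtain ⟨hsub, hax⟩ := hseg t ht
        by_cases hh : (f t).2 = (f (t+1)).2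
        · obtain ⟨B, hBH, hB2⟩ := hgood.covH _ _ hh hsub
          exact ⟨⟨B, Or.inl hBH⟩, hB2, fun _ => hBH, fun hc => absurd hh hc⟩
        · have hv : (f t).1 = (f (t+1)).1 := hax.resolve_left hh
          obtain ⟨B, hBV, hB2⟩ := hgood.covV _ _ hv hsub
          exact ⟨⟨B, Or.inr hBV⟩, hB2, fun hc => absurd hc hh, fun _ => hBV⟩
      choose B hBs hBH hBV using hB
      have hadj : ∀ t (h1 : t < k) (h2 : t + 1 < k),
          (thetaGraph H V).dist (B t h1) (B (t+1) h2) ≤ 1 := by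
        intro t h1 h2
        by_cases heq : B t h1 = B (t+1) h2
        · rw [heq, SimpleGraph.dist_self]; omega
        · have hadj' : (thetaGraph H V).Adj (B t h1) (B (t+1) h2) := by
            refine ⟨heq, ?_, ⟨f (t+1), hBs t h1 (right_mem_segment ℝ _ _),
              hBs (t+1) h2 (left_mem_segment ℝ _ _)⟩⟩
            by_cases ha : (f t).2 = (f (t+1)).2 <;> by_cases hb : (f (t+1)).2 = (f (t+2)).2
            · exact absurd ⟨t, by omega, Or.inl ⟨ha, hb⟩⟩ hmerge
            · exact Or.inl ⟨hBH t h1 ha, hBV (t+1) h2 (by rwa [show t+1+1 = t+2 from rfl])⟩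
            · exact Or.inr ⟨hBV t h1 ha, hBH (t+1) h2 (by rwa [show t+1+1 = t+2 from rfl])⟩
            · have v1 : (f t).1 = (f (t+1)).1 := (hseg t h1).2.resolve_left ha
              have v2 : (f (t+1)).1 = (f (t+2)).1 := (hseg (t+1) h2).2.resolve_left hb
              exact absurd ⟨t, by omega, Or.inr ⟨v1, v2⟩⟩ hmerge
          calc (thetaGraph H V).dist (B t h1) (B (t+1) h2) ≤ hadj'.toWalk.length :=
                SimpleGraph.dist_le _
            _ = 1 := rfl
      have h0k : 0 < k := by omega
      have hchain : ∀ t (h1 : t < k),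
          (thetaGraph H V).dist (B 0 h0k) (B t h1) ≤ t := by
        intro t
        induction t with
        | zero => intro h1; rw [SimpleGraph.dist_self]
        | succ s ihs =>
          intro h1
          have hs : s < k := by omega
          calc (thetaGraph H V).dist (B 0 h0k) (B (s+1) h1)
              ≤ (thetaGraph H V).dist (B 0 h0k) (B s hs)
                + (thetaGraph H V).dist (B s hs) (B (s+1) h1) :=
                hgood.conn.dist_triangle
            _ ≤ s + 1 := Nat.add_le_add (ihs hs) (hadj s hs h1)
      have hklt : k - 1 < k := by omega
      refine ⟨B 0 h0k, B (k-1) hklt, ?_, ?_, ?_⟩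
      · rw [← h0]; exact hBs 0 h0k (left_mem_segment ℝ _ _)
      · have : k - 1 + 1 = k := by omega
        have := hBs (k-1) hklt (right_mem_segment ℝ (f (k-1)) (f (k-1+1)))
        rwa [show k - 1 + 1 = k by omega, hk] at this
      · have := hchain (k-1) hklt
        omega

/-- If no single member of `H ∪ V` contains both `p` and `q`, then
`rld(p,q) = min{ Ô(i,j) : i, j ∈ H ∪ V, p ∈ i, q ∈ j }`. -/
theorem rld_eq_min_oDist (P : Set (ℝ × ℝ)) (H V : Set (Set (ℝ × ℝ)))
    (hgood : GoodDecomp P H V)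
    (p q : ℝ × ℝ) (hp : p ∈ P) (hq : q ∈ P)
    (hsep : ¬ ∃ B ∈ H ∪ V, p ∈ B ∧ q ∈ B) :
    rld P p q = sInf {m : ℕ | ∃ i j : {B : Set (ℝ × ℝ) // B ∈ H ∪ V},
      p ∈ i.1 ∧ q ∈ j.1 ∧ oDist H V i j = m} := by
  classical
  set S1 : Set ℕ := {k : ℕ | ∃ f : ℕ → ℝ × ℝ, IsRectPath P p q k f} with hS1def
  set S2 : Set ℕ := {m : ℕ | ∃ i j : {B : Set (ℝ × ℝ) // B ∈ H ∪ V},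
      p ∈ i.1 ∧ q ∈ j.1 ∧ oDist H V i j = m} with hS2def
  obtain ⟨hp0, hhp0, hsubp0⟩ := hgood.covH p p rfl (by rw [segment_same]; simpa using hp)
  obtain ⟨hq0, hhq0, hsubq0⟩ := hgood.covH q q rfl (by rw [segment_same]; simpa using hq)
  set i0 : {B : Set (ℝ × ℝ) // B ∈ H ∪ V} := ⟨hp0, Or.inl hhp0⟩
  set j0 : {B : Set (ℝ × ℝ) // B ∈ H ∪ V} := ⟨hq0, Or.inl hhq0⟩
  have hi0 : p ∈ i0.1 := hsubp0 (left_mem_segment ℝ p p)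
  have hj0 : q ∈ j0.1 := hsubq0 (left_mem_segment ℝ q q)
  have hS2ne : S2.Nonempty := ⟨oDist H V i0 j0, i0, j0, hi0, hj0, rfl⟩
  have hup : ∀ m ∈ S2, m ∈ S1 := by
    rintro m ⟨i, j, hpi, hqj, rfl⟩
    obtain ⟨W, hW⟩ := hgood.conn.exists_walk_length_eq_dist i j
    have hpre : W.length = 0 → AxisParallel p q := by
      intro h0
      have hij : i = j := SimpleGraph.Walk.eq_of_length_eq_zero h0
      exact absurd ⟨i.1, i.2, hpi, by rw [hij]; exact hqj⟩ hsep
    obtain ⟨f, hf⟩ := rect_upper hgood q i j W hqj p hpi hpre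
    rw [hW] at hf
    exact ⟨f, hf⟩
  have hS1ne : S1.Nonempty := ⟨_, hup _ hS2ne.choose_spec⟩
  show sInf S1 = sInf S2
  apply le_antisymm
  · exact Nat.sInf_le (hup _ (Nat.sInf_mem hS2ne))
  · obtain ⟨f, hf⟩ := Nat.sInf_mem hS1ne
    obtain ⟨i, j, hpi, hqj, hle⟩ := rect_lower hgood p q hsep _ f hf
    calc sInf S2 ≤ oDist H V i j := Nat.sInf_le ⟨i, j, hpi, hqj, rfl⟩
      _ ≤ sInf S1 := hle
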